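/- Let V be a finite-dimensional vector space over an infinite field k of characteristic ≠ 2, s a reflection on V, α ∈ V* a linear form with kernel the reflecting hyperplane V^s, and R the polynomial ring on V. Then R = R^s ⊕ α·R^s as graded R^s-modules; in particular R is free of rank 2 over R^s with basis {1, α}. -/

import Mathlib

set_option synthInstance.maxHeartbeats 400000
set_option maxHeartbeats 1000000
noncomputable section

/-- The algebra of polynomial (regular) functions on a vector space `V`:
the subalgebra of `V → k` generated by the linear forms. -/
def PolyFun (k V : Type*) [CommRing k] [AddCommGroup V] [Module k V] :
    Subalgebra k (V → k) :=
  Algebra.adjoin k (Set.range fun φ : Module.Dual k V => ⇑φ)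

/-- Restriction of functions to a subset `X`, as an algebra homomorphism. -/
def restrictAlgHom (k : Type*) {V : Type*} [CommRing k] (X : Set V) :
    (V → k) →ₐ[k] (X → k) where
  toFun f x := f x
  map_one' := rfl
  map_mul' _ _ := rfl
  map_zero' := rfl
  map_add' _ _ := rfl
  commutes' _ := rfl

/-- The algebra of regular functions on a subset `X ⊆ V`: restrictions of
polynomial functions. -/
def RegFun (k : Type*) {V : Type*} [CommRing k] [AddCommGroup V] [Module k V]
    (X : Set V) : Subalgebra k (X → k) :=
  (PolyFun k V).map (restrictAlgHom k X)

/-- The subalgebra of polynomial functions invariant under `s : V → V`. -/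
def InvPolyFun (k : Type*) {V : Type*} [CommRing k] [AddCommGroup V] [Module k V]
    (s : V → V) : Subalgebra k (V → k) where
  carrier := {f | f ∈ PolyFun k V ∧ ∀ v, f (s v) = f v}
  mul_mem' := fun ha hb => ⟨mul_mem ha.1 hb.1, fun v => by
    simp only [Pi.mul_apply, ha.2 v, hb.2 v]⟩
  add_mem' := fun ha hb => ⟨add_mem ha.1 hb.1, fun v => by
    simp only [Pi.add_apply, ha.2 v, hb.2 v]⟩
  algebraMap_mem' := fun r => ⟨Subalgebra.algebraMap_mem _ r, fun _ => rfl⟩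

theorem invPolyFun_le (k : Type*) {V : Type*} [CommRing k] [AddCommGroup V]
    [Module k V] (s : V → V) : InvPolyFun k s ≤ PolyFun k V :=
  fun _ hf => hf.1

/-- `R` is a module over its subring `R^s` of `s`-invariants. -/
noncomputable instance instModInvPolyFun (k : Type*) {V : Type*} [CommRing k]
    [AddCommGroup V] [Module k V] (s : V → V) :
    Module ↥(InvPolyFun k s) ↥(PolyFun k V) :=
  ((Subalgebra.inclusion (invPolyFun_le k s)).toRingHom).toModule

instance (k : Type*) {V : Type*} [CommRing k] [AddCommGroup V] [Module k V]
    (s : V → V) :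
    SMulCommClass ↥(InvPolyFun k s) ↥(PolyFun k V) ↥(PolyFun k V) :=
  ⟨fun g p f => mul_left_comm (Subalgebra.inclusion (invPolyFun_le k s) g) p f⟩

/-- A function on `V` is homogeneous of degree `m` (in the natural grading,
which is half of the grading of the paper, where `V*` sits in degree `2`). -/
def IsHomogeneousFun {k V : Type*} [CommRing k] [AddCommGroup V] [Module k V]
    (f : V → k) (m : ℕ) : Prop :=
  ∀ (c : k) (v : V), f (c • v) = c ^ m * f v

section AuxLemmas

/-- Composition with a linear map, as an algebra hom on functions. -/
def compAlgHom {k V : Type*} [CommRing k] [AddCommGroup V] [Module k V]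
    (t : V →ₗ[k] V) : (V → k) →ₐ[k] (V → k) where
  toFun f := fun v => f (t v)
  map_one' := rfl
  map_mul' _ _ := rfl
  map_zero' := rfl
  map_add' _ _ := rfl
  commutes' _ := rfl

lemma comp_linear_mem {k V : Type*} [CommRing k] [AddCommGroup V] [Module k V]
    (t : V →ₗ[k] V) {f : V → k} (hf : f ∈ PolyFun k V) :
    (fun v => f (t v)) ∈ PolyFun k V := by
  have hle : PolyFun k V ≤ (PolyFun k V).comap (compAlgHom t) := by
    apply Algebra.adjoin_le
    rintro _ ⟨φ, rfl⟩
    exact Algebra.subset_adjoin ⟨φ.comp t, rfl⟩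
  exact hle hf

lemma polyFun_mul_eq_zero {k V : Type*} [Field k] [Infinite k] [AddCommGroup V]
    [Module k V] [FiniteDimensional k V] {f g : V → k}
    (hf : f ∈ PolyFun k V) (hg : g ∈ PolyFun k V)
    (hfg : ∀ v, f v * g v = 0) : (∀ v, f v = 0) ∨ ∀ v, g v = 0 := by
  classical
  set n := Module.finrank k V with hn
  let b : Module.Basis (Fin n) k V := Module.finBasis k V
  let Φ : MvPolynomial (Fin n) k →ₐ[k] (V → k) :=
    MvPolynomial.aeval (fun i => (fun v => b.repr v i : V → k))
  have hΦ : ∀ (p : MvPolynomial (Fin n) k) (v : V),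
      Φ p v = MvPolynomial.eval (fun i => b.repr v i) p := by
    intro p v
    induction p using MvPolynomial.induction_on with
    | C a => simp [Φ]
    | add p q hp hq => simp only [map_add, Pi.add_apply, hp, hq]
    | mul_X p i hp =>
        simp only [map_mul, Pi.mul_apply, hp, MvPolynomial.eval_mul,
          MvPolynomial.eval_X]
        congr 1
        simp [Φ]
  have hrange : PolyFun k V ≤ Φ.range := by
    apply Algebra.adjoin_le
    rintro _ ⟨φ, rfl⟩
    refine ⟨∑ i, MvPolynomial.C (φ (b i)) * MvPolynomial.X i, ?_⟩
    show Φ _ = _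
    funext v
    rw [hΦ]
    simp only [map_sum, MvPolynomial.eval_mul, MvPolynomial.eval_C,
      MvPolynomial.eval_X]
    conv_rhs => rw [← b.sum_repr v]
    rw [map_sum]
    simp [mul_comm]
  obtain ⟨p, hp⟩ := hrange hf
  obtain ⟨q, hq⟩ := hrange hg
  have hp' : ∀ v, Φ p v = f v := fun v => congrFun hp v
  have hq' : ∀ v, Φ q v = g v := fun v => congrFun hq v
  have hpq : p * q = 0 := by
    apply MvPolynomial.funext
    intro x
    have hx : (fun i => b.repr (b.equivFun.symm x) i) = x := by
      funext i
      rw [← b.equivFun_apply, LinearEquiv.apply_symm_apply]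
    simp only [map_mul, map_zero]
    rw [← hx, ← hΦ, ← hΦ, hp' _, hq' _]
    exact hfg _
  rcases mul_eq_zero.mp hpq with h | h
  · left; intro v; rw [← hp' v, h, map_zero]; rfl
  · right; intro v; rw [← hq' v, h, map_zero]; rfl

end AuxLemmas

/-- Let `V` be a finite-dimensional vector space over an infinite
field `k` of characteristic `≠ 2`, `s : V → V` a reflection (an involution
whose fixed space is the kernel of a nonzero linear form `β`, with
`β ∘ s = -β`), `R` the ring of polynomial functions on `V` and `R^s ⊆ R` the
invariant subring.  Then `R = R^s ⊕ β·R^s` as graded `R^s`-modules: every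
`f ∈ R` is uniquely `f = g + β·h` with `g, h ∈ R^s`; in particular `R` is free
of rank `2` over `R^s` with basis `{1, β}`, and if `f` is homogeneous of
degree `m` then `g` is homogeneous of degree `m` and `h` of degree `m - 1`. -/
theorem polyFun_free_rank_two_over_invariants
    {k V : Type*} [Field k] [Infinite k] (hchar : (2 : k) ≠ 0)
    [AddCommGroup V] [Module k V] [FiniteDimensional k V]
    (s : V ≃ₗ[k] V) (hs : ∀ v, s (s v) = v)
    (β : Module.Dual k V) (hβ : β ≠ 0)
    (hker : ∀ v, β v = 0 ↔ s v = v)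
    (hsβ : ∀ v, β (s v) = - β v) :
    (∀ f : ↥(PolyFun k V), ∃! gh : ↥(InvPolyFun k ⇑s) × ↥(InvPolyFun k ⇑s),
      f = Subalgebra.inclusion (invPolyFun_le k ⇑s) gh.1 +
          (⟨⇑β, Algebra.subset_adjoin ⟨β, rfl⟩⟩ : ↥(PolyFun k V)) *
            Subalgebra.inclusion (invPolyFun_le k ⇑s) gh.2) ∧
    (∃ b : Module.Basis (Fin 2) ↥(InvPolyFun k ⇑s) ↥(PolyFun k V),
      b 0 = 1 ∧ b 1 = (⟨⇑β, Algebra.subset_adjoin ⟨β, rfl⟩⟩ : ↥(PolyFun k V))) ∧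
    (∀ (f : ↥(PolyFun k V)) (g h : ↥(InvPolyFun k ⇑s)),
      f = Subalgebra.inclusion (invPolyFun_le k ⇑s) g +
          (⟨⇑β, Algebra.subset_adjoin ⟨β, rfl⟩⟩ : ↥(PolyFun k V)) *
            Subalgebra.inclusion (invPolyFun_le k ⇑s) h →
      ∀ m : ℕ, IsHomogeneousFun (f : V → k) m →
        IsHomogeneousFun (g : V → k) m ∧
        ∀ (c : k) (v : V), (h : V → k) (c • v) * c = c ^ m * (h : V → k) v) := by
  classical
  have hβmem : ⇑β ∈ PolyFun k V := Algebra.subset_adjoin ⟨β, rfl⟩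
  set B : ↥(PolyFun k V) := ⟨⇑β, hβmem⟩ with hBdef
  have hβne : ¬ ∀ v, β v = 0 := fun h => hβ (by ext v; exact h v)
  -- cancellation by β
  have hcancel : ∀ f : V → k, f ∈ PolyFun k V → (∀ v, β v * f v = 0) →
      ∀ v, f v = 0 := by
    intro f hf h
    rcases polyFun_mul_eq_zero hβmem hf h with h' | h'
    · exact absurd h' hβne
    · exact h'
  -- a vector e with β e = 1
  obtain ⟨e₀, he₀⟩ : ∃ v, β v ≠ 0 := by
    by_contra h; push_neg at h; exact hβne h
  set e : V := (β e₀)⁻¹ • e₀ with he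
  have hbe : β e = 1 := by simp [he, inv_mul_cancel₀ he₀]
  set a : V := e - s e with ha
  have hva : ∀ v, v - s v = β v • a := by
    intro v
    have hu : s (v - β v • e) = v - β v • e := by
      rw [← hker]; simp [hbe]
    have hvdec : v = (v - β v • e) + β v • e := by abel
    calc v - s v
        = ((v - β v • e) + β v • e) - s ((v - β v • e) + β v • e) := by rw [← hvdec]
      _ = β v • e - β v • s e := by rw [map_add, map_smul, hu]; abel
      _ = β v • a := by rw [ha, smul_sub]
  -- divisibility of f - f ∘ s by β
  have hdvd0 : ∀ f, f ∈ PolyFun k V → ∃ h ∈ PolyFun k V,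
      ∀ v, f v - f (s v) = β v * h v := by
    intro f hf
    refine Algebra.adjoin_induction
      (p := fun x _ => ∃ h ∈ PolyFun k V, ∀ v, x v - x (s v) = β v * h v)
      ?_ ?_ ?_ ?_ hf
    · rintro _ ⟨φ, rfl⟩
      refine ⟨fun _ => φ a, (PolyFun k V).algebraMap_mem (φ a), fun v => ?_⟩
      rw [← map_sub, hva v, map_smul, smul_eq_mul]
    · intro r
      exact ⟨0, zero_mem _, fun v => by simp⟩
    · rintro x y hx hy ⟨h₁, h₁m, h₁e⟩ ⟨h₂, h₂m, h₂e⟩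
      refine ⟨h₁ + h₂, add_mem h₁m h₂m, fun v => ?_⟩
      simp only [Pi.add_apply]
      linear_combination h₁e v + h₂e v
    · rintro x y hx hy ⟨h₁, h₁m, h₁e⟩ ⟨h₂, h₂m, h₂e⟩
      refine ⟨x * h₂ + h₁ * (fun v => y (s v)),
        add_mem (mul_mem hx h₂m) (mul_mem h₁m (comp_linear_mem s.toLinearMap hy)),
        fun v => ?_⟩
      simp only [Pi.add_apply, Pi.mul_apply]
      linear_combination x v * h₂e v + y (s v) * h₁e v
  -- the quotient is automatically invariant
  have hdvd : ∀ f, f ∈ PolyFun k V → ∃ h, h ∈ PolyFun k V ∧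
      (∀ v, h (s v) = h v) ∧ ∀ v, f v - f (s v) = β v * h v := by
    intro f hf
    obtain ⟨h, hm, he'⟩ := hdvd0 f hf
    have hinv : ∀ v, (h - fun w => h (s w)) v = 0 := by
      apply hcancel _ (sub_mem hm (comp_linear_mem s.toLinearMap hm))
      intro v
      have e1 := he' v
      have e2 := he' (s v)
      rw [hs v, hsβ v] at e2
      simp only [Pi.sub_apply]
      linear_combination -e1 - e2
    refine ⟨h, hm, fun v => ?_, he'⟩
    have h0 := hinv v
    simp only [Pi.sub_apply] at h0
    exact (sub_eq_zero.mp h0).symm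
  have i2 : (2 : k) * (2 : k)⁻¹ = 1 := mul_inv_cancel₀ hchar
  -- existence of decomposition
  have hdecomp : ∀ f : ↥(PolyFun k V),
      ∃ gh : ↥(InvPolyFun k ⇑s) × ↥(InvPolyFun k ⇑s),
      f = Subalgebra.inclusion (invPolyFun_le k ⇑s) gh.1 +
          B * Subalgebra.inclusion (invPolyFun_le k ⇑s) gh.2 := by
    intro f
    obtain ⟨h, hm, hinv, he'⟩ := hdvd f.1 f.2
    have hgm : (fun v => (2:k)⁻¹ * (f.1 v + f.1 (s v))) ∈ PolyFun k V := by
      have := Subalgebra.smul_mem (PolyFun k V)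
        (add_mem f.2 (comp_linear_mem s.toLinearMap f.2)) ((2:k)⁻¹)
      exact this
    have hhm : (fun v => (2:k)⁻¹ * h v) ∈ PolyFun k V := by
      have := Subalgebra.smul_mem (PolyFun k V) hm ((2:k)⁻¹)
      exact this
    refine ⟨(⟨fun v => (2:k)⁻¹ * (f.1 v + f.1 (s v)), hgm, fun v => ?_⟩,
            ⟨fun v => (2:k)⁻¹ * h v, hhm, fun v => ?_⟩), ?_⟩
    · show (2:k)⁻¹ * (f.1 (s v) + f.1 (s (s v))) = (2:k)⁻¹ * (f.1 v + f.1 (s v))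
      rw [hs v]; ring
    · show (2:k)⁻¹ * h (s v) = (2:k)⁻¹ * h v
      rw [hinv v]
    · apply Subtype.ext
      funext v
      show f.1 v = (2:k)⁻¹ * (f.1 v + f.1 (s v)) + β v * ((2:k)⁻¹ * h v)
      linear_combination (2:k)⁻¹ * he' v - f.1 v * i2
  -- uniqueness kernel
  have huniq0 : ∀ g h : ↥(InvPolyFun k ⇑s),
      (∀ v, (g : V → k) v + β v * (h : V → k) v = 0) → g = 0 ∧ h = 0 := by
    intro g h H
    have hg0 : ∀ v, (g : V → k) v = 0 := by
      intro v
      have h1 := H v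
      have h2 := H (s v)
      rw [hsβ v, g.2.2 v, h.2.2 v] at h2
      have h3 : (2 : k) * (g : V → k) v = 0 := by linear_combination h1 + h2
      exact (mul_eq_zero.mp h3).resolve_left hchar
    have hh0 : ∀ v, (h : V → k) v = 0 := by
      apply hcancel _ h.2.1
      intro v
      have h1 := H v
      linear_combination h1 - hg0 v
    exact ⟨Subtype.ext (funext hg0), Subtype.ext (funext hh0)⟩
  refine ⟨?_, ?_, ?_⟩
  · -- unique decomposition
    intro f
    obtain ⟨gh, hgh⟩ := hdecomp f
    refine ⟨gh, hgh, ?_⟩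
    rintro ⟨g', h'⟩ hy
    have e1 : ∀ v, (f : V → k) v = (gh.1 : V → k) v + β v * (gh.2 : V → k) v :=
      fun v => congrFun (congrArg Subtype.val hgh) v
    have e2 : ∀ v, (f : V → k) v = (g' : V → k) v + β v * (h' : V → k) v :=
      fun v => congrFun (congrArg Subtype.val hy) v
    obtain ⟨hgz, hhz⟩ := huniq0 (g' - gh.1) (h' - gh.2) (by
      intro v
      show (g' : V → k) v - (gh.1 : V → k) v +
        β v * ((h' : V → k) v - (gh.2 : V → k) v) = 0
      linear_combination e1 v - e2 v)
    have hg' : g' = gh.1 := by rwa [sub_eq_zero] at hgz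
    have hh' : h' = gh.2 := by rwa [sub_eq_zero] at hhz
    exact Prod.ext hg' hh'
  · -- basis
    set w : Fin 2 → ↥(PolyFun k V) := ![1, B] with hw
    have hsmul : ∀ (r : ↥(InvPolyFun k ⇑s)) (x : ↥(PolyFun k V)) (v : V),
        ((r • x : ↥(PolyFun k V)) : V → k) v = (r : V → k) v * (x : V → k) v :=
      fun r x v => rfl
    have hli : LinearIndependent ↥(InvPolyFun k ⇑s) w := by
      rw [Fintype.linearIndependent_iff]
      intro c hc
      rw [Fin.sum_univ_two] at hc
      have h0 : ∀ v, (c 0 : V → k) v + β v * (c 1 : V → k) v = 0 := by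
        intro v
        have this2 : (c 0 : V → k) v * 1 + (c 1 : V → k) v * β v = 0 :=
          congrFun (congrArg Subtype.val hc) v
        linear_combination this2
      obtain ⟨h1, h2⟩ := huniq0 (c 0) (c 1) h0
      intro i
      fin_cases i <;> assumption
    have hspan : ⊤ ≤ Submodule.span ↥(InvPolyFun k ⇑s) (Set.range w) := by
      intro f _
      obtain ⟨⟨g, h⟩, hgh⟩ := hdecomp f
      have hf : f = g • w 0 + h • w 1 := by
        rw [hgh]
        apply Subtype.ext
        funext v
        rw [show ((g • w 0 + h • w 1 : ↥(PolyFun k V)) : V → k) v =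
          (g : V → k) v * (w 0 : V → k) v + (h : V → k) v * (w 1 : V → k) v from rfl]
        show (g : V → k) v + β v * (h : V → k) v =
          (g : V → k) v * (w 0 : V → k) v + (h : V → k) v * (w 1 : V → k) v
        simp only [hw, Matrix.cons_val_zero, Matrix.cons_val_one, Matrix.head_cons]
        show _ = (g : V → k) v * 1 + (h : V → k) v * β v
        ring
      rw [hf]
      exact add_mem (Submodule.smul_mem _ _ (Submodule.subset_span ⟨0, rfl⟩))
        (Submodule.smul_mem _ _ (Submodule.subset_span ⟨1, rfl⟩))
    refine ⟨Module.Basis.mk hli hspan, ?_, ?_⟩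
    · rw [Module.Basis.mk_apply]; simp [hw]
    · rw [Module.Basis.mk_apply]; simp [hw]
  · -- homogeneity
    intro f g h hf m hm
    have e3 : ∀ v, (f : V → k) v = (g : V → k) v + β v * (h : V → k) v :=
      fun v => congrFun (congrArg Subtype.val hf) v
    have key : ∀ (c : k) (v : V),
        (g : V → k) (c • v) = c ^ m * (g : V → k) v ∧
        c * (h : V → k) (c • v) = c ^ m * (h : V → k) v := by
      intro c
      have hGmem : (fun v => (g : V → k) (c • v) - c ^ m * (g : V → k) v)
          ∈ PolyFun k V := by
        have h1 : (fun v => (g : V → k) ((c • (LinearMap.id : V →ₗ[k] V)) v))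
            ∈ PolyFun k V := comp_linear_mem _ g.2.1
        have h2 := Subalgebra.smul_mem (PolyFun k V) g.2.1 (c ^ m)
        exact sub_mem h1 h2
      have hHmem : (fun v => c * (h : V → k) (c • v) - c ^ m * (h : V → k) v)
          ∈ PolyFun k V := by
        have h1 : (fun v => (h : V → k) ((c • (LinearMap.id : V →ₗ[k] V)) v))
            ∈ PolyFun k V := comp_linear_mem _ h.2.1
        have h1' := Subalgebra.smul_mem (PolyFun k V) h1 c
        have h2 := Subalgebra.smul_mem (PolyFun k V) h.2.1 (c ^ m)
        exact sub_mem h1' h2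
      have hGinv : ∀ v, (g : V → k) (c • s v) - c ^ m * (g : V → k) (s v) =
          (g : V → k) (c • v) - c ^ m * (g : V → k) v := by
        intro v
        rw [← map_smul, g.2.2 (c • v), g.2.2 v]
      have hHinv : ∀ v, c * (h : V → k) (c • s v) - c ^ m * (h : V → k) (s v) =
          c * (h : V → k) (c • v) - c ^ m * (h : V → k) v := by
        intro v
        rw [← map_smul, h.2.2 (c • v), h.2.2 v]
      obtain ⟨hz1, hz2⟩ := huniq0
        ⟨fun v => (g : V → k) (c • v) - c ^ m * (g : V → k) v, hGmem, hGinv⟩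
        ⟨fun v => c * (h : V → k) (c • v) - c ^ m * (h : V → k) v, hHmem, hHinv⟩
        (by
          intro v
          show (g : V → k) (c • v) - c ^ m * (g : V → k) v +
            β v * (c * (h : V → k) (c • v) - c ^ m * (h : V → k) v) = 0
          have E1 : (f : V → k) (c • v) =
              (g : V → k) (c • v) + c * β v * (h : V → k) (c • v) := by
            have := e3 (c • v)
            rwa [map_smul, smul_eq_mul] at this
          have E2 := hm c v
          have E3 := e3 v
          linear_combination E2 - E1 + c ^ m * E3)
      intro v
      constructor
      · have := congrFun (congrArg Subtype.val hz1) v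
        have h' : (g : V → k) (c • v) - c ^ m * (g : V → k) v = 0 := this
        linear_combination h'
      · have := congrFun (congrArg Subtype.val hz2) v
        have h' : c * (h : V → k) (c • v) - c ^ m * (h : V → k) v = 0 := this
        linear_combination h'
    refine ⟨fun c v => (key c v).1, fun c v => ?_⟩
    have := (key c v).2
    linear_combination this
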